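/- Let R be a ring satisfying Hypothesis H over a field F of characteristic 0, and let D be the F-subalgebra of End_F(R) generated by the multiplication operators by elements of R together with the F-linear derivations of R. Let M be a left D-module that has finite length as a D-module. Then, regarding M as an R-module via the inclusion of the multiplication operators R → D, the set of associated primes Ass_R(M) is finite. -/

import Mathlib

/-- A Noetherian local ring is *regular* if its Krull dimension equals the dimension of its
cotangent space (the minimal number of generators of the maximal ideal). -/
def IsRegularLocal (A : Type*) [CommRing A] [IsLocalRing A] : Prop :=
  IsNoetherianRing A ∧
    ringKrullDim A =
      Module.finrank (IsLocalRing.ResidueField A) (IsLocalRing.CotangentSpace A)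

/-- A commutative ring is *regular* if all of its localizations at primes are regular local. -/
def IsRegularRing' (R : Type*) [CommRing R] : Prop :=
  ∀ (P : Ideal R) (_ : P.IsPrime), IsRegularLocal (Localization.AtPrime P)

/-- Hypothesis H: `R` is a commutative Noetherian regular ring containing a field `F` of
characteristic `0` such that (1) `R` is equidimensional of dimension `n`, (2) every residue
field at a maximal ideal is algebraic over `F`, and (3) `Der_F(R)` is a finitely generated
projective `R`-module of rank `n` whose localization at every maximal ideal `m` is the module
of `F`-linear derivations of `R_m` (via the canonical map). -/
structure HypothesisH (F : Type*) (R : Type*) [Field F] [CommRing R] [Algebra F R]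
    (n : ℕ) : Prop where
  charZero : CharZero F
  noetherian : IsNoetherianRing R
  regular : IsRegularRing' R
  equidim : ∀ (m : Ideal R) (_ : m.IsMaximal), ringKrullDim (Localization.AtPrime m) = n
  residue_algebraic : ∀ (m : Ideal R) (_ : m.IsMaximal), Algebra.IsAlgebraic F (R ⧸ m)
  der_finite : Module.Finite R (Derivation F R R)
  der_projective : Module.Projective R (Derivation F R R)
  der_free_rank : ∀ (m : Ideal R) (_ : m.IsMaximal),
    Module.Free (Localization.AtPrime m) (LocalizedModule m.primeCompl (Derivation F R R)) ∧
      Module.finrank (Localization.AtPrime m)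
        (LocalizedModule m.primeCompl (Derivation F R R)) = n
  der_localize : ∀ (m : Ideal R) (_ : m.IsMaximal),
    ∃ g : Derivation F R R →ₗ[R]
        Derivation F (Localization.AtPrime m) (Localization.AtPrime m),
      (∀ (δ : Derivation F R R) (r : R),
          g δ (algebraMap R (Localization.AtPrime m) r)
            = algebraMap R (Localization.AtPrime m) (δ r)) ∧
        IsLocalizedModule m.primeCompl g


/-- The ring `D` of `F`-linear differential operators of `R`: the `F`-subalgebra of
`End_F(R)` generated by the multiplication operators by elements of `R` together with the
`F`-linear derivations of `R`. -/
def diffAlgebra (F R : Type*) [Field F] [CommRing R] [Algebra F R] :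
    Subalgebra F (Module.End F R) :=
  Algebra.adjoin F
    ((Set.range fun r : R => (LinearMap.mulLeft F r : Module.End F R)) ∪
      (Set.range fun δ : Derivation F R R => (δ : R →ₗ[F] R)))

namespace DiffAux
set_option synthInstance.maxHeartbeats 1000000
set_option maxHeartbeats 1600000
variable (F R : Type*) [Field F] [CommRing R] [Algebra F R]

abbrev instRingD : Ring ↥(diffAlgebra F R) := Subalgebra.toRing _

attribute [local instance] instRingD

theorem mulLeft_mem (r : R) :
    (LinearMap.mulLeft F r : Module.End F R) ∈ diffAlgebra F R :=
  Algebra.subset_adjoin (Or.inl ⟨r, rfl⟩)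

/-- The inclusion of `R` into `D` by multiplication operators. -/
def phi : R →+* ↥(diffAlgebra F R) where
  toFun r := ⟨LinearMap.mulLeft F r, mulLeft_mem F R r⟩
  map_one' := Subtype.ext <| LinearMap.ext fun t => by simp
  map_mul' r s := Subtype.ext <| LinearMap.ext fun t => by simp [mul_assoc]
  map_zero' := Subtype.ext <| LinearMap.ext fun t => by simp
  map_add' r s := Subtype.ext <| LinearMap.ext fun t => by simp [add_mul]

variable {F R}

/-- Derivations drop powers of an ideal by one. -/
theorem deriv_pow_mem (δ : Derivation F R R) (P : Ideal R) :
    ∀ m : ℕ, ∀ a ∈ P ^ (m + 1), δ a ∈ P ^ m := by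
  intro m
  induction m with
  | zero => intro a _; simp [Ideal.one_eq_top]
  | succ m ih =>
      intro a ha
      rw [pow_succ] at ha
      refine Submodule.mul_induction_on ha (fun b hb c hc => ?_) (fun x y hx hy => by
        simpa using add_mem hx hy)
      rw [Derivation.leibniz]
      refine add_mem (Ideal.mul_mem_right _ _ hb) ?_
      rw [smul_eq_mul, pow_succ']
      exact Ideal.mul_mem_mul hc (ih b hb)

/-- In `D`, `φ a * δ = δ * φ a - φ (δ a)`. -/
theorem phi_mul_deriv (δ : Derivation F R R)
    (hδ : ((δ : R →ₗ[F] R) : Module.End F R) ∈ diffAlgebra F R) (a : R) :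
    phi F R a * (⟨(δ : R →ₗ[F] R), hδ⟩ : ↥(diffAlgebra F R))
      = (⟨(δ : R →ₗ[F] R), hδ⟩ : ↥(diffAlgebra F R)) * phi F R a - phi F R (δ a) := by
  apply Subtype.ext
  apply LinearMap.ext
  intro t
  show a * δ t = δ (a * t) - δ a * t
  rw [Derivation.leibniz]
  simp only [smul_eq_mul]
  ring

/-- Key lemma: for each differential operator `d` there is `k` such that
`φ(P^(m+k)) * d ⊆ D · φ(P^m)` for every `m`. -/
theorem key (P : Ideal R) (d : ↥(diffAlgebra F R)) :
    ∃ k : ℕ, ∀ m : ℕ, ∀ a ∈ P ^ (m + k),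
      phi F R a * d ∈ Submodule.span ↥(diffAlgebra F R)
        ((fun b => (phi F R b : ↥(diffAlgebra F R))) '' ((P ^ m : Ideal R) : Set R)) := by
  obtain ⟨e, he⟩ := d
  suffices h : ∀ (x : Module.End F R) (hx : x ∈ Algebra.adjoin F
      ((Set.range fun r : R => (LinearMap.mulLeft F r : Module.End F R)) ∪
        (Set.range fun δ : Derivation F R R => (δ : R →ₗ[F] R)))),
      ∃ k : ℕ, ∀ m : ℕ, ∀ a ∈ P ^ (m + k),
        phi F R a * (⟨x, hx⟩ : ↥(diffAlgebra F R)) ∈ Submodule.span ↥(diffAlgebra F R)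
          ((fun b => (phi F R b : ↥(diffAlgebra F R))) '' ((P ^ m : Ideal R) : Set R)) by
    exact h e he
  intro x hx
  induction hx using Algebra.adjoin_induction with
  | mem x hxs =>
      rcases hxs with ⟨r, rfl⟩ | ⟨δ, rfl⟩
      · refine ⟨0, fun m a ha => ?_⟩
        have h1 : (⟨LinearMap.mulLeft F r, _⟩ : ↥(diffAlgebra F R)) = phi F R r := rfl
        rw [h1, ← map_mul]
        exact Submodule.subset_span ⟨a * r, Ideal.mul_mem_right r _ (by simpa using ha), rfl⟩
      · refine ⟨1, fun m a ha => ?_⟩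
        show phi F R a * (⟨(δ : R →ₗ[F] R), Algebra.subset_adjoin (Or.inr ⟨δ, rfl⟩)⟩ :
          ↥(diffAlgebra F R)) ∈ _
        rw [phi_mul_deriv δ (Algebra.subset_adjoin (Or.inr ⟨δ, rfl⟩)) a]
        refine sub_mem ?_ (Submodule.subset_span ⟨δ a, deriv_pow_mem δ P m a ha, rfl⟩)
        have ha' : a ∈ P ^ m := Ideal.pow_le_pow_right (Nat.le_succ m) ha
        have hmem : (phi F R a : ↥(diffAlgebra F R)) ∈ Submodule.span ↥(diffAlgebra F R)
            ((fun b => (phi F R b : ↥(diffAlgebra F R))) '' ((P ^ m : Ideal R) : Set R)) :=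
          Submodule.subset_span ⟨a, ha', rfl⟩
        simpa [smul_eq_mul] using Submodule.smul_mem _
          (⟨(δ : R →ₗ[F] R), Algebra.subset_adjoin (Or.inr ⟨δ, rfl⟩)⟩ : ↥(diffAlgebra F R)) hmem
  | algebraMap c =>
      refine ⟨0, fun m a ha => ?_⟩
      have h1 : (⟨algebraMap F (Module.End F R) c, _⟩ : ↥(diffAlgebra F R))
          = algebraMap F ↥(diffAlgebra F R) c := rfl
      rw [h1, ← Algebra.commutes c (phi F R a), ← smul_eq_mul]
      have hmem : (phi F R a : ↥(diffAlgebra F R)) ∈ Submodule.span ↥(diffAlgebra F R)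
          ((fun b => (phi F R b : ↥(diffAlgebra F R))) '' ((P ^ m : Ideal R) : Set R)) :=
        Submodule.subset_span ⟨a, by simpa using ha, rfl⟩
      exact Submodule.smul_mem _ _ hmem
  | add x y hxm hym hx hy =>
      obtain ⟨k₁, h₁⟩ := hx
      obtain ⟨k₂, h₂⟩ := hy
      refine ⟨k₁ + k₂, fun m a ha => ?_⟩
      have hsum : (⟨x + y, _⟩ : ↥(diffAlgebra F R)) = ⟨x, hxm⟩ + ⟨y, hym⟩ := rfl
      rw [hsum, mul_add]
      exact add_mem (h₁ m a (Ideal.pow_le_pow_right (by omega) ha))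
        (h₂ m a (Ideal.pow_le_pow_right (by omega) ha))
  | mul x y hxm hym hx hy =>
      obtain ⟨k₁, h₁⟩ := hx
      obtain ⟨k₂, h₂⟩ := hy
      refine ⟨k₁ + k₂, fun m a ha => ?_⟩
      have hprod : (⟨x * y, _⟩ : ↥(diffAlgebra F R)) = ⟨x, hxm⟩ * ⟨y, hym⟩ := rfl
      have ha' : a ∈ P ^ ((m + k₂) + k₁) := by
        rwa [show (m + k₂) + k₁ = m + (k₁ + k₂) by omega]
      have hx' := h₁ (m + k₂) a ha'
      rw [hprod, ← mul_assoc]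
      refine Submodule.span_induction
        (p := fun u _ => u * (⟨y, hym⟩ : ↥(diffAlgebra F R)) ∈ Submodule.span ↥(diffAlgebra F R)
          ((fun b => (phi F R b : ↥(diffAlgebra F R))) '' ((P ^ m : Ideal R) : Set R)))
        ?_ ?_ ?_ ?_ hx'
      · rintro u ⟨b, hb, rfl⟩
        exact h₂ m b hb
      · simpa using Submodule.zero_mem _
      · intro u v hum hvm hu hv
        rw [add_mul]; exact add_mem hu hv
      · intro c u hum hu
        rw [smul_eq_mul, mul_assoc, ← smul_eq_mul]
        exact Submodule.smul_mem _ c hu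

variable (X : Type*) [AddCommGroup X] [Module ↥(diffAlgebra F R) X]

/-- If `φ(P)` kills `x`, then `φ(P^k) • (d • x) = 0` for some `k` (for each `d`). -/
theorem kills (P : Ideal R) (x : X)
    (hx : ∀ a ∈ P, (phi F R a : ↥(diffAlgebra F R)) • x = 0) (d : ↥(diffAlgebra F R)) :
    ∃ k : ℕ, ∀ a ∈ P ^ k, (phi F R a : ↥(diffAlgebra F R)) • d • x = 0 := by
  obtain ⟨k, hk⟩ := key P d
  refine ⟨1 + k, fun a ha => ?_⟩
  have h1 := hk 1 a ha
  rw [← mul_smul]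
  have hkill : ∀ e ∈ Submodule.span ↥(diffAlgebra F R)
      ((fun b => (phi F R b : ↥(diffAlgebra F R))) '' ((P ^ 1 : Ideal R) : Set R)),
      e • x = 0 := by
    intro e he
    induction he using Submodule.span_induction with
    | mem u hu =>
        obtain ⟨b, hb, rfl⟩ := hu
        exact hx b (by simpa using hb)
    | zero => simp
    | add u v hum hvm hu hv => rw [add_smul, hu, hv, add_zero]
    | smul c u hum hu => rw [smul_assoc, hu, smul_zero]
  exact hkill _ h1

theorem ass_subsingleton [IsNoetherianRing R] [IsSimpleModule ↥(diffAlgebra F R) X] :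
    (@associatedPrimes R _ X _ (Module.compHom X (phi F R))).Subsingleton := by
  letI : Module R X := Module.compHom X (phi F R)
  intro P hP Q hQ
  obtain ⟨hPp, x, hPx⟩ := isAssociatedPrime_iff.mp hP
  obtain ⟨hQp, y, hQy⟩ := isAssociatedPrime_iff.mp hQ
  have memP : ∀ r : R, r ∈ P ↔ (phi F R r : ↥(diffAlgebra F R)) • x = 0 := fun r => by
    rw [hPx]; exact Submodule.mem_colon_singleton.trans (Submodule.mem_bot (R := R))
  have memQ : ∀ r : R, r ∈ Q ↔ (phi F R r : ↥(diffAlgebra F R)) • y = 0 := fun r => by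
    rw [hQy]; exact Submodule.mem_colon_singleton.trans (Submodule.mem_bot (R := R))
  have hx0 : x ≠ 0 := by
    rintro rfl
    exact hPp.ne_top (Ideal.eq_top_iff_one _ |>.mpr ((memP 1).mpr (smul_zero _)))
  have hy0 : y ≠ 0 := by
    rintro rfl
    exact hQp.ne_top (Ideal.eq_top_iff_one _ |>.mpr ((memQ 1).mpr (smul_zero _)))
  have main : ∀ (u v : X), u ≠ 0 → ∀ (Pu Qv : Ideal R), Qv.IsPrime →
      (∀ r : R, r ∈ Pu ↔ (phi F R r : ↥(diffAlgebra F R)) • u = 0) →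
      (∀ r : R, r ∈ Qv ↔ (phi F R r : ↥(diffAlgebra F R)) • v = 0) → Pu ≤ Qv := by
    intro u v hu Pu Qv hQv hPu hQv'
    have hspan : Submodule.span ↥(diffAlgebra F R) {u} = ⊤ := by
      rcases eq_bot_or_eq_top (Submodule.span ↥(diffAlgebra F R) {u}) with h | h
      · exact absurd (Submodule.span_singleton_eq_bot.mp h) hu
      · exact h
    have hv : v ∈ Submodule.span ↥(diffAlgebra F R) {u} := hspan ▸ Submodule.mem_top
    obtain ⟨d, rfl⟩ := Submodule.mem_span_singleton.mp hv
    obtain ⟨k, hk⟩ := kills X Pu u (fun a ha => (hPu a).mp ha) d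
    exact hQv.le_of_pow_le fun a ha => (hQv' a).mpr (hk a ha)
  exact le_antisymm (main x y hx0 P Q hQp memP memQ) (main y x hy0 Q P hPp memQ memP)

theorem ass_subset_union [IsNoetherianRing R] (N : Submodule ↥(diffAlgebra F R) X) :
    @associatedPrimes R _ X _ (Module.compHom X (phi F R)) ⊆
      @associatedPrimes R _ ↥N _ (Module.compHom ↥N (phi F R)) ∪
        @associatedPrimes R _ (X ⧸ N) _ (Module.compHom (X ⧸ N) (phi F R)) := by
  letI : Module R X := Module.compHom X (phi F R)
  letI : Module R ↥N := Module.compHom ↥N (phi F R)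
  letI : Module R (X ⧸ N) := Module.compHom (X ⧸ N) (phi F R)
  intro P hP
  obtain ⟨hPp, x, hPx⟩ := isAssociatedPrime_iff.mp hP
  have memP : ∀ r : R, r ∈ P ↔ (phi F R r : ↥(diffAlgebra F R)) • x = 0 := fun r => by
    rw [hPx]; exact Submodule.mem_colon_singleton.trans (Submodule.mem_bot (R := R))
  by_cases hcase : ∃ r : R, (phi F R r : ↥(diffAlgebra F R)) • x ∈ N ∧
      (phi F R r : ↥(diffAlgebra F R)) • x ≠ 0
  · obtain ⟨r, hrN, hr0⟩ := hcase
    left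
    refine isAssociatedPrime_iff.mpr ⟨hPp, ⟨(phi F R r : ↥(diffAlgebra F R)) • x, hrN⟩, ?_⟩
    ext s
    rw [Submodule.mem_colon_singleton, Submodule.mem_bot]
    have hsmul : (s • (⟨(phi F R r : ↥(diffAlgebra F R)) • x, hrN⟩ : N) = 0)
        ↔ (phi F R (s * r) : ↥(diffAlgebra F R)) • x = 0 := by
      rw [Subtype.ext_iff]
      show (phi F R s : ↥(diffAlgebra F R)) • (phi F R r : ↥(diffAlgebra F R)) • x = 0
        ↔ (phi F R (s * r) : ↥(diffAlgebra F R)) • x = 0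
      rw [map_mul, mul_smul]
    rw [hsmul]
    constructor
    · intro hs
      exact (memP (s * r)).mp (Ideal.mul_mem_right r P hs)
    · intro h0
      have hsr : s * r ∈ P := (memP (s * r)).mpr h0
      have hrP : r ∉ P := fun hr => hr0 ((memP r).mp hr)
      exact (hPp.mem_or_mem hsr).resolve_right hrP
  · push_neg at hcase
    right
    refine isAssociatedPrime_iff.mpr ⟨hPp, Submodule.Quotient.mk x, ?_⟩
    ext s
    rw [Submodule.mem_colon_singleton, Submodule.mem_bot]
    have hsmul : s • (Submodule.Quotient.mk x : X ⧸ N)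
        = Submodule.Quotient.mk ((phi F R s : ↥(diffAlgebra F R)) • x) := by
      show (phi F R s : ↥(diffAlgebra F R)) • (Submodule.Quotient.mk x : X ⧸ N) = _
      rw [← Submodule.Quotient.mk_smul]
    rw [hsmul, Submodule.Quotient.mk_eq_zero]
    constructor
    · intro hs
      rw [(memP s).mp hs]
      exact Submodule.zero_mem N
    · intro hmem
      exact (memP s).mpr (hcase s hmem)

theorem ass_finite [IsNoetherianRing R] {X : Type*} [AddCommGroup X] [Module ↥(diffAlgebra F R) X]
    (h : IsFiniteLength ↥(diffAlgebra F R) X) :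
    (@associatedPrimes R _ X _ (Module.compHom X (phi F R))).Finite := by
  induction h with
  | @of_subsingleton Y _ _ _ =>
      letI : Module R Y := Module.compHom Y (phi F R)
      rw [associatedPrimes.eq_empty_of_subsingleton]
      exact Set.finite_empty
  | @of_simple_quotient Y _ _ N _ h ih =>
      refine Set.Finite.subset (Set.Finite.union ih ?_) (ass_subset_union Y N)
      exact Set.Subsingleton.finite (ass_subsingleton (Y ⧸ N))

end DiffAux


/-- Let `R` satisfy Hypothesis H over a field `F` of characteristic `0`, and let `D` be the
ring of `F`-linear differential operators of `R`.  If `M` is a left `D`-module of finite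
length whose underlying `R`-module structure is induced by the inclusion `R → D` as
multiplication operators, then the set of associated primes of `M` over `R` is finite. -/
theorem finite_assPrimes_of_isFiniteLength_over_diffAlgebra
    {F R : Type*} [Field F] [CommRing R] [Algebra F R] {n : ℕ}
    (hH : HypothesisH F R n)
    (M : Type*) [AddCommGroup M] [Module R M] [Module ↥(diffAlgebra F R) M]
    (hcompat : ∀ (r : R) (hr : (LinearMap.mulLeft F r : Module.End F R) ∈ diffAlgebra F R)
      (m : M), (⟨LinearMap.mulLeft F r, hr⟩ : ↥(diffAlgebra F R)) • m = r • m)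
    (hlen : IsFiniteLength ↥(diffAlgebra F R) M) :
    (associatedPrimes R M).Finite := by
  haveI := hH.noetherian
  have hfin := DiffAux.ass_finite (R := R) hlen
  have key2 : ∀ (r : R) (x : M), (DiffAux.phi F R r : ↥(diffAlgebra F R)) • x = r • x :=
    fun r x => hcompat r (DiffAux.mulLeft_mem F R r) x
  have heq : associatedPrimes R M
      = @associatedPrimes R _ M _ (Module.compHom M (DiffAux.phi F R)) := by
    ext P
    constructor
    · intro hP
      obtain ⟨hp, x, hx⟩ := isAssociatedPrime_iff.mp hP
      refine (@isAssociatedPrime_iff R _ P M _ (Module.compHom M (DiffAux.phi F R)) _).mpr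
        ⟨hp, x, ?_⟩
      ext r
      rw [@Submodule.mem_colon_singleton R M _ _ (Module.compHom M (DiffAux.phi F R)),
        @Submodule.mem_bot R M _ _ (Module.compHom M (DiffAux.phi F R)), hx,
        Submodule.mem_colon_singleton, Submodule.mem_bot]
      show r • x = 0 ↔ (DiffAux.phi F R r : ↥(diffAlgebra F R)) • x = 0
      rw [key2 r x]
    · intro hP
      obtain ⟨hp, x, hx⟩ := (@isAssociatedPrime_iff R _ P M _
        (Module.compHom M (DiffAux.phi F R)) _).mp hP
      refine isAssociatedPrime_iff.mpr ⟨hp, x, ?_⟩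
      ext r
      rw [Submodule.mem_colon_singleton, Submodule.mem_bot, hx,
        @Submodule.mem_colon_singleton R M _ _ (Module.compHom M (DiffAux.phi F R)),
        @Submodule.mem_bot R M _ _ (Module.compHom M (DiffAux.phi F R))]
      show (DiffAux.phi F R r : ↥(diffAlgebra F R)) • x = 0 ↔ r • x = 0
      rw [key2 r x]
  rw [heq]
  exact hfin
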